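/- For every natural number n≥8, the star K_{1,n} is not a 50% max-tolerance graph. -/

import Mathlib

variable {V : Type*}

/-- A max-tolerance representation: each vertex `u` gets an interval `[a u, b u]` and a
positive tolerance `t u`, and distinct `u, v` are adjacent iff the length of
`[a u, b u] ∩ [a v, b v]` (zero if empty) is at least `max (t u) (t v)`. -/
def IsMaxTolRep (G : SimpleGraph V) (a b t : V → ℝ) : Prop :=
  (∀ u, a u ≤ b u) ∧ (∀ u, 0 < t u) ∧
    ∀ u v : V, u ≠ v →
      (G.Adj u v ↔ max (t u) (t v) ≤ max (min (b u) (b v) - max (a u) (a v)) 0)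

/-- A 50% max-tolerance graph: a max-tolerance representation in which each tolerance is
half the length of the corresponding interval. -/
def IsHalfMaxTolG (G : SimpleGraph V) : Prop :=
  ∃ a b : V → ℝ, IsMaxTolRep G a b (fun u => (b u - a u) / 2)

/-- The star `K_{1,n}`: the center is `none`, the `n` leaves are `some i`, and the
edges are exactly those joining the center to each leaf. -/
def starGraph (n : ℕ) : SimpleGraph (Option (Fin n)) where
  Adj x y := x ≠ y ∧ (x = none ∨ y = none)
  symm := ⟨fun x y h => ⟨h.1.symm, h.2.symm⟩⟩
  loopless := ⟨fun x h => h.1 rfl⟩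


/-- Two points in the "both big" class are adjacent. -/
lemma R0pair (T pu qu pv qv : ℝ) (hT : 0 < T)
    (hpu : T ≤ pu) (hqu : T ≤ qu) (hpv : T ≤ pv) (hqv : T ≤ qv)
    (hfu : pu + qu ≤ 4*T) (hfv : pv + qv ≤ 4*T)
    (hnon : min pu pv + min qu qv < max ((pu+qu)/2) ((pv+qv)/2)) : False := by
  have h1 := le_min hpu hpv
  have h2 := le_min hqu hqv
  rcases le_total (pu+qu) (pv+qv) with h | h
  · rw [max_eq_right (by linarith)] at hnon; linarith
  · rw [max_eq_left (by linarith)] at hnon; linarith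

/-- In the X class (p ≥ T, q < T), for q-sorted pairs the length more than doubles. -/
lemma pairX (T pu qu pv qv : ℝ) (hT : 0 < T)
    (hpu : T ≤ pu) (hpv : T ≤ pv) (hqu0 : 0 ≤ qu) (hqvT : qv < T)
    (hfu : pu ≤ qu + 2*T)
    (hq : qu ≤ qv)
    (hnon : min pu pv + min qu qv < max ((pu+qu)/2) ((pv+qv)/2)) :
    pu + qu < (pv + qv)/2 := by
  rw [min_eq_left hq] at hnon
  rcases le_total (pu+qu) (pv+qv) with h | h
  · rw [max_eq_right (by linarith)] at hnon
    rcases le_total pu pv with h2 | h2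
    · rw [min_eq_left h2] at hnon; linarith
    · rw [min_eq_right h2] at hnon; linarith
  · rw [max_eq_left (by linarith)] at hnon
    have := le_min hpu hpv
    linarith

/-- No three pairwise non-adjacent points in the X class. -/
lemma X3 (T p1 q1 p2 q2 p3 q3 : ℝ) (hT : 0 < T)
    (hp1 : T ≤ p1) (hp2 : T ≤ p2) (hp3 : T ≤ p3)
    (hq1 : 0 ≤ q1) (hq2 : 0 ≤ q2) (hq3 : 0 ≤ q3)
    (hq1T : q1 < T) (hq2T : q2 < T) (hq3T : q3 < T)
    (hf1 : p1 ≤ q1 + 2*T) (hf2 : p2 ≤ q2 + 2*T) (hf3 : p3 ≤ q3 + 2*T)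
    (h12 : min p1 p2 + min q1 q2 < max ((p1+q1)/2) ((p2+q2)/2))
    (h13 : min p1 p3 + min q1 q3 < max ((p1+q1)/2) ((p3+q3)/2))
    (h23 : min p2 p3 + min q2 q3 < max ((p2+q2)/2) ((p3+q3)/2)) : False := by
  have h21 : min p2 p1 + min q2 q1 < max ((p2+q2)/2) ((p1+q1)/2) := by
    rw [min_comm, min_comm q2, max_comm]; exact h12
  have h31 : min p3 p1 + min q3 q1 < max ((p3+q3)/2) ((p1+q1)/2) := by
    rw [min_comm, min_comm q3, max_comm]; exact h13
  have h32 : min p3 p2 + min q3 q2 < max ((p3+q3)/2) ((p2+q2)/2) := by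
    rw [min_comm, min_comm q3, max_comm]; exact h23
  rcases le_total q1 q2 with a | a <;> rcases le_total q1 q3 with b | b <;>
    rcases le_total q2 q3 with c | c
  · have A := pairX T p1 q1 p2 q2 hT hp1 hp2 hq1 hq2T hf1 a h12
    have B := pairX T p2 q2 p3 q3 hT hp2 hp3 hq2 hq3T hf2 c h23
    linarith
  · have A := pairX T p1 q1 p3 q3 hT hp1 hp3 hq1 hq3T hf1 b h13
    have B := pairX T p3 q3 p2 q2 hT hp3 hp2 hq3 hq2T hf3 c h32
    linarith
  · have A := pairX T p3 q3 p1 q1 hT hp3 hp1 hq3 hq1T hf3 b h31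
    have B := pairX T p1 q1 p2 q2 hT hp1 hp2 hq1 hq2T hf1 a h12
    linarith
  · have A := pairX T p3 q3 p1 q1 hT hp3 hp1 hq3 hq1T hf3 b h31
    have B := pairX T p1 q1 p2 q2 hT hp1 hp2 hq1 hq2T hf1 a h12
    linarith
  · have A := pairX T p2 q2 p1 q1 hT hp2 hp1 hq2 hq1T hf2 a h21
    have B := pairX T p1 q1 p3 q3 hT hp1 hp3 hq1 hq3T hf1 b h13
    linarith
  · have A := pairX T p2 q2 p1 q1 hT hp2 hp1 hq2 hq1T hf2 a h21
    have B := pairX T p1 q1 p3 q3 hT hp1 hp3 hq1 hq3T hf1 b h13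
    linarith
  · have A := pairX T p2 q2 p3 q3 hT hp2 hp3 hq2 hq3T hf2 c h23
    have B := pairX T p3 q3 p1 q1 hT hp3 hp1 hq3 hq1T hf3 b h31
    linarith
  · have A := pairX T p3 q3 p2 q2 hT hp3 hp2 hq3 hq2T hf3 c h32
    have B := pairX T p2 q2 p1 q1 hT hp2 hp1 hq2 hq1T hf2 a h21
    linarith

/-- In the Z class, no point can dominate another. -/
lemma nodomZ (T pa qa pb qb : ℝ) (hT : 0 < T) (hLa : T ≤ pa + qa)
    (hpb : pb < T) (hqb : qb < T)
    (hab : pa ≤ pb) (hq : qa ≤ qb)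
    (hnon : min pa pb + min qa qb < max ((pa+qa)/2) ((pb+qb)/2)) : False := by
  rw [min_eq_left hab, min_eq_left hq] at hnon
  rcases le_total (pa+qa) (pb+qb) with h | h
  · rw [max_eq_right (by linarith)] at hnon; linarith
  · rw [max_eq_left (by linarith)] at hnon; linarith

/-- Sorted staircase of three Z-class points is contradictory. -/
lemma Zsorted (T pa qa pb qb pc qc : ℝ) (hT : 0 < T)
    (hpa : 0 ≤ pa) (hqc : 0 ≤ qc) (hqaT : qa < T) (hpcT : pc < T)
    (hLa : T ≤ pa + qa) (hLb : T ≤ pb + qb) (hLc : T ≤ pc + qc)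
    (hab : pa ≤ pb) (hbc : pb ≤ pc) (hqba : qb ≤ qa) (hqcb : qc ≤ qb)
    (hnab : min pa pb + min qa qb < max ((pa+qa)/2) ((pb+qb)/2))
    (hnbc : min pb pc + min qb qc < max ((pb+qb)/2) ((pc+qc)/2)) : False := by
  rw [min_eq_left hab, min_eq_right hqba] at hnab
  rw [min_eq_left hbc, min_eq_right hqcb] at hnbc
  rcases le_total (pb+qb) (pa+qa) with h | h
  · rw [max_eq_left (by linarith)] at hnab
    rcases le_total (pc+qc) (pb+qb) with h' | h'
    · rw [max_eq_left (by linarith)] at hnbc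
      linarith
    · rw [max_eq_right (by linarith)] at hnbc
      linarith
  · rw [max_eq_right (by linarith)] at hnab
    rcases le_total (pc+qc) (pb+qb) with h' | h'
    · rw [max_eq_left (by linarith)] at hnbc
      linarith
    · rw [max_eq_right (by linarith)] at hnbc
      linarith

/-- No three pairwise non-adjacent points in the Z class. -/
lemma Z3 (T p1 q1 p2 q2 p3 q3 : ℝ) (hT : 0 < T)
    (hp1 : 0 ≤ p1) (hp2 : 0 ≤ p2) (hp3 : 0 ≤ p3)
    (hq1 : 0 ≤ q1) (hq2 : 0 ≤ q2) (hq3 : 0 ≤ q3)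
    (hp1T : p1 < T) (hp2T : p2 < T) (hp3T : p3 < T)
    (hq1T : q1 < T) (hq2T : q2 < T) (hq3T : q3 < T)
    (hL1 : T ≤ p1 + q1) (hL2 : T ≤ p2 + q2) (hL3 : T ≤ p3 + q3)
    (h12 : min p1 p2 + min q1 q2 < max ((p1+q1)/2) ((p2+q2)/2))
    (h13 : min p1 p3 + min q1 q3 < max ((p1+q1)/2) ((p3+q3)/2))
    (h23 : min p2 p3 + min q2 q3 < max ((p2+q2)/2) ((p3+q3)/2)) : False := by
  have h21 : min p2 p1 + min q2 q1 < max ((p2+q2)/2) ((p1+q1)/2) := by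
    rw [min_comm, min_comm q2, max_comm]; exact h12
  have h31 : min p3 p1 + min q3 q1 < max ((p3+q3)/2) ((p1+q1)/2) := by
    rw [min_comm, min_comm q3, max_comm]; exact h13
  have h32 : min p3 p2 + min q3 q2 < max ((p3+q3)/2) ((p2+q2)/2) := by
    rw [min_comm, min_comm q3, max_comm]; exact h23
  rcases le_total p1 p2 with a | a <;> rcases le_total p1 p3 with b | b <;>
    rcases le_total p2 p3 with c | c
  · have hqba : q2 ≤ q1 := by
      by_contra hc
      exact nodomZ T p1 q1 p2 q2 hT hL1 hp2T hq2T a (le_of_lt (lt_of_not_ge hc)) h12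
    have hqcb : q3 ≤ q2 := by
      by_contra hc
      exact nodomZ T p2 q2 p3 q3 hT hL2 hp3T hq3T c (le_of_lt (lt_of_not_ge hc)) h23
    exact Zsorted T p1 q1 p2 q2 p3 q3 hT hp1 hq3 hq1T hp3T hL1 hL2 hL3 a c hqba hqcb h12 h23
  · have hqba : q3 ≤ q1 := by
      by_contra hc
      exact nodomZ T p1 q1 p3 q3 hT hL1 hp3T hq3T b (le_of_lt (lt_of_not_ge hc)) h13
    have hqcb : q2 ≤ q3 := by
      by_contra hc
      exact nodomZ T p3 q3 p2 q2 hT hL3 hp2T hq2T c (le_of_lt (lt_of_not_ge hc)) h32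
    exact Zsorted T p1 q1 p3 q3 p2 q2 hT hp1 hq2 hq1T hp2T hL1 hL3 hL2 b c hqba hqcb h13 h32
  · have hqba : q1 ≤ q3 := by
      by_contra hc
      exact nodomZ T p3 q3 p1 q1 hT hL3 hp1T hq1T b (le_of_lt (lt_of_not_ge hc)) h31
    have hqcb : q2 ≤ q1 := by
      by_contra hc
      exact nodomZ T p1 q1 p2 q2 hT hL1 hp2T hq2T a (le_of_lt (lt_of_not_ge hc)) h12
    exact Zsorted T p3 q3 p1 q1 p2 q2 hT hp3 hq2 hq3T hp2T hL3 hL1 hL2 b a hqba hqcb h31 h12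
  · have hqba : q1 ≤ q3 := by
      by_contra hc
      exact nodomZ T p3 q3 p1 q1 hT hL3 hp1T hq1T b (le_of_lt (lt_of_not_ge hc)) h31
    have hqcb : q2 ≤ q1 := by
      by_contra hc
      exact nodomZ T p1 q1 p2 q2 hT hL1 hp2T hq2T a (le_of_lt (lt_of_not_ge hc)) h12
    exact Zsorted T p3 q3 p1 q1 p2 q2 hT hp3 hq2 hq3T hp2T hL3 hL1 hL2 b a hqba hqcb h31 h12
  · have hqba : q1 ≤ q2 := by
      by_contra hc
      exact nodomZ T p2 q2 p1 q1 hT hL2 hp1T hq1T a (le_of_lt (lt_of_not_ge hc)) h21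
    have hqcb : q3 ≤ q1 := by
      by_contra hc
      exact nodomZ T p1 q1 p3 q3 hT hL1 hp3T hq3T b (le_of_lt (lt_of_not_ge hc)) h13
    exact Zsorted T p2 q2 p1 q1 p3 q3 hT hp2 hq3 hq2T hp3T hL2 hL1 hL3 a b hqba hqcb h21 h13
  · have hqba : q1 ≤ q2 := by
      by_contra hc
      exact nodomZ T p2 q2 p1 q1 hT hL2 hp1T hq1T a (le_of_lt (lt_of_not_ge hc)) h21
    have hqcb : q3 ≤ q1 := by
      by_contra hc
      exact nodomZ T p1 q1 p3 q3 hT hL1 hp3T hq3T b (le_of_lt (lt_of_not_ge hc)) h13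
    exact Zsorted T p2 q2 p1 q1 p3 q3 hT hp2 hq3 hq2T hp3T hL2 hL1 hL3 a b hqba hqcb h21 h13
  · have hqba : q3 ≤ q2 := by
      by_contra hc
      exact nodomZ T p2 q2 p3 q3 hT hL2 hp3T hq3T c (le_of_lt (lt_of_not_ge hc)) h23
    have hqcb : q1 ≤ q3 := by
      by_contra hc
      exact nodomZ T p3 q3 p1 q1 hT hL3 hp1T hq1T b (le_of_lt (lt_of_not_ge hc)) h31
    exact Zsorted T p2 q2 p3 q3 p1 q1 hT hp2 hq1 hq2T hp1T hL2 hL3 hL1 c b hqba hqcb h23 h31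
  · have hqba : q2 ≤ q3 := by
      by_contra hc
      exact nodomZ T p3 q3 p2 q2 hT hL3 hp2T hq2T c (le_of_lt (lt_of_not_ge hc)) h32
    have hqcb : q1 ≤ q2 := by
      by_contra hc
      exact nodomZ T p2 q2 p1 q1 hT hL2 hp1T hq1T a (le_of_lt (lt_of_not_ge hc)) h21
    exact Zsorted T p3 q3 p2 q2 p1 q1 hT hp3 hq1 hq3T hp1T hL3 hL2 hL1 c a hqba hqcb h32 h21

/-- At most 7 pairwise non-adjacent leaves can coexist (abstract form). -/
lemma count_le (T : ℝ) (hT : 0 < T) (p q : Fin 8 → ℝ)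
    (hp : ∀ i, 0 ≤ p i) (hq : ∀ i, 0 ≤ q i)
    (hfeas : ∀ i, max T ((p i + q i)/2) ≤ min T (p i) + min T (q i))
    (hnon : ∀ i j, i ≠ j →
      min (p i) (p j) + min (q i) (q j) < max ((p i + q i)/2) ((p j + q j)/2)) : False := by
  classical
  set c : Fin 8 → Fin 4 := fun i =>
    if T ≤ p i then (if T ≤ q i then 0 else 1) else (if T ≤ q i then 2 else 3) with hc
  have dec : ∀ i, (T ≤ p i ∧ T ≤ q i ∧ c i = 0) ∨ (T ≤ p i ∧ q i < T ∧ c i = 1)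
      ∨ (p i < T ∧ T ≤ q i ∧ c i = 2) ∨ (p i < T ∧ q i < T ∧ c i = 3) := by
    intro i
    by_cases h1 : T ≤ p i <;> by_cases h2 : T ≤ q i
    · exact Or.inl ⟨h1, h2, by simp [hc, h1, h2]⟩
    · exact Or.inr (Or.inl ⟨h1, lt_of_not_ge h2, by simp [hc, h1, h2]⟩)
    · exact Or.inr (Or.inr (Or.inl ⟨lt_of_not_ge h1, h2, by simp [hc, h1, h2]⟩))
    · exact Or.inr (Or.inr (Or.inr ⟨lt_of_not_ge h1, lt_of_not_ge h2, by simp [hc, h1, h2]⟩))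
  have mem0 : ∀ i, c i = 0 → T ≤ p i ∧ T ≤ q i := by
    intro i h
    rcases dec i with ⟨a, b, e⟩ | ⟨a, b, e⟩ | ⟨a, b, e⟩ | ⟨a, b, e⟩
    · exact ⟨a, b⟩
    all_goals (rw [h] at e; exact absurd e (by decide))
  have mem1 : ∀ i, c i = 1 → T ≤ p i ∧ q i < T := by
    intro i h
    rcases dec i with ⟨a, b, e⟩ | ⟨a, b, e⟩ | ⟨a, b, e⟩ | ⟨a, b, e⟩
    · rw [h] at e; exact absurd e (by decide)
    · exact ⟨a, b⟩
    all_goals (rw [h] at e; exact absurd e (by decide))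
  have mem2 : ∀ i, c i = 2 → p i < T ∧ T ≤ q i := by
    intro i h
    rcases dec i with ⟨a, b, e⟩ | ⟨a, b, e⟩ | ⟨a, b, e⟩ | ⟨a, b, e⟩
    · rw [h] at e; exact absurd e (by decide)
    · rw [h] at e; exact absurd e (by decide)
    · exact ⟨a, b⟩
    · rw [h] at e; exact absurd e (by decide)
  have mem3 : ∀ i, c i = 3 → p i < T ∧ q i < T := by
    intro i h
    rcases dec i with ⟨a, b, e⟩ | ⟨a, b, e⟩ | ⟨a, b, e⟩ | ⟨a, b, e⟩
    · rw [h] at e; exact absurd e (by decide)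
    · rw [h] at e; exact absurd e (by decide)
    · rw [h] at e; exact absurd e (by decide)
    · exact ⟨a, b⟩
  have hcard : (Finset.univ : Finset (Fin 8)).card
      = ∑ k : Fin 4, (Finset.univ.filter fun i => c i = k).card :=
    Finset.card_eq_sum_card_fiberwise (fun i _ => Finset.mem_univ (c i))
  have hb0 : ((Finset.univ : Finset (Fin 8)).filter fun i => c i = 0).card ≤ 1 := by
    by_contra hcon
    push_neg at hcon
    obtain ⟨x, hx, y, hy, hxy⟩ := Finset.one_lt_card.mp hcon
    simp only [Finset.mem_filter] at hx hy
    obtain ⟨hxp, hxq⟩ := mem0 x hx.2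
    obtain ⟨hyp, hyq⟩ := mem0 y hy.2
    have fx : p x + q x ≤ 4*T := by
      have h := hfeas x
      rw [min_eq_left hxp, min_eq_left hxq] at h
      have := le_trans (le_max_right T ((p x + q x)/2)) h
      linarith
    have fy : p y + q y ≤ 4*T := by
      have h := hfeas y
      rw [min_eq_left hyp, min_eq_left hyq] at h
      have := le_trans (le_max_right T ((p y + q y)/2)) h
      linarith
    exact R0pair T (p x) (q x) (p y) (q y) hT hxp hxq hyp hyq fx fy (hnon x y hxy)
  have hb1 : ((Finset.univ : Finset (Fin 8)).filter fun i => c i = 1).card ≤ 2 := by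
    by_contra hcon
    push_neg at hcon
    obtain ⟨x, hx, y, hy, z, hz, hxy, hxz, hyz⟩ := Finset.two_lt_card.mp hcon
    simp only [Finset.mem_filter] at hx hy hz
    obtain ⟨hxp, hxq⟩ := mem1 x hx.2
    obtain ⟨hyp, hyq⟩ := mem1 y hy.2
    obtain ⟨hzp, hzq⟩ := mem1 z hz.2
    have fx : p x ≤ q x + 2*T := by
      have h := hfeas x
      rw [min_eq_left hxp, min_eq_right (le_of_lt hxq)] at h
      have := le_trans (le_max_right T ((p x + q x)/2)) h
      linarith
    have fy : p y ≤ q y + 2*T := by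
      have h := hfeas y
      rw [min_eq_left hyp, min_eq_right (le_of_lt hyq)] at h
      have := le_trans (le_max_right T ((p y + q y)/2)) h
      linarith
    have fz : p z ≤ q z + 2*T := by
      have h := hfeas z
      rw [min_eq_left hzp, min_eq_right (le_of_lt hzq)] at h
      have := le_trans (le_max_right T ((p z + q z)/2)) h
      linarith
    exact X3 T (p x) (q x) (p y) (q y) (p z) (q z) hT hxp hyp hzp (hq x) (hq y) (hq z)
      hxq hyq hzq fx fy fz (hnon x y hxy) (hnon x z hxz) (hnon y z hyz)
  have hswap : ∀ i j, i ≠ j →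
      min (q i) (q j) + min (p i) (p j) < max ((q i + p i)/2) ((q j + p j)/2) := by
    intro i j hij
    have h := hnon i j hij
    rw [add_comm (p i) (q i), add_comm (p j) (q j)] at h
    linarith
  have hb2 : ((Finset.univ : Finset (Fin 8)).filter fun i => c i = 2).card ≤ 2 := by
    by_contra hcon
    push_neg at hcon
    obtain ⟨x, hx, y, hy, z, hz, hxy, hxz, hyz⟩ := Finset.two_lt_card.mp hcon
    simp only [Finset.mem_filter] at hx hy hz
    obtain ⟨hxp, hxq⟩ := mem2 x hx.2
    obtain ⟨hyp, hyq⟩ := mem2 y hy.2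
    obtain ⟨hzp, hzq⟩ := mem2 z hz.2
    have fx : q x ≤ p x + 2*T := by
      have h := hfeas x
      rw [min_eq_right (le_of_lt hxp), min_eq_left hxq] at h
      have := le_trans (le_max_right T ((p x + q x)/2)) h
      linarith
    have fy : q y ≤ p y + 2*T := by
      have h := hfeas y
      rw [min_eq_right (le_of_lt hyp), min_eq_left hyq] at h
      have := le_trans (le_max_right T ((p y + q y)/2)) h
      linarith
    have fz : q z ≤ p z + 2*T := by
      have h := hfeas z
      rw [min_eq_right (le_of_lt hzp), min_eq_left hzq] at h
      have := le_trans (le_max_right T ((p z + q z)/2)) h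
      linarith
    exact X3 T (q x) (p x) (q y) (p y) (q z) (p z) hT hxq hyq hzq (hp x) (hp y) (hp z)
      hxp hyp hzp fx fy fz (hswap x y hxy) (hswap x z hxz) (hswap y z hyz)
  have hb3 : ((Finset.univ : Finset (Fin 8)).filter fun i => c i = 3).card ≤ 2 := by
    by_contra hcon
    push_neg at hcon
    obtain ⟨x, hx, y, hy, z, hz, hxy, hxz, hyz⟩ := Finset.two_lt_card.mp hcon
    simp only [Finset.mem_filter] at hx hy hz
    obtain ⟨hxp, hxq⟩ := mem3 x hx.2
    obtain ⟨hyp, hyq⟩ := mem3 y hy.2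
    obtain ⟨hzp, hzq⟩ := mem3 z hz.2
    have fx : T ≤ p x + q x := by
      have h := hfeas x
      rw [min_eq_right (le_of_lt hxp), min_eq_right (le_of_lt hxq)] at h
      have := le_trans (le_max_left T ((p x + q x)/2)) h
      linarith
    have fy : T ≤ p y + q y := by
      have h := hfeas y
      rw [min_eq_right (le_of_lt hyp), min_eq_right (le_of_lt hyq)] at h
      have := le_trans (le_max_left T ((p y + q y)/2)) h
      linarith
    have fz : T ≤ p z + q z := by
      have h := hfeas z
      rw [min_eq_right (le_of_lt hzp), min_eq_right (le_of_lt hzq)] at h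
      have := le_trans (le_max_left T ((p z + q z)/2)) h
      linarith
    exact Z3 T (p x) (q x) (p y) (q y) (p z) (q z) hT (hp x) (hp y) (hp z)
      (hq x) (hq y) (hq z) hxp hyp hzp hxq hyq hzq fx fy fz
      (hnon x y hxy) (hnon x z hxz) (hnon y z hyz)
  rw [Finset.card_univ, Fintype.card_fin, Fin.sum_univ_four] at hcard
  omega
/-- For every `n ≥ 8`, the star `K_{1,n}` is not a 50% max-tolerance graph. -/
theorem star_not_half_maxtol (n : ℕ) (hn : 8 ≤ n) : ¬ IsHalfMaxTolG (starGraph n) := by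
  rintro ⟨a, b, hab, ht, hiff⟩
  have hT : (0:ℝ) < (b none - a none)/2 := ht none
  set T : ℝ := (b none - a none)/2 with hTdef
  set M : ℝ := a none + T with hMdef
  set p : Fin 8 → ℝ := fun i => M - a (some (Fin.castLE hn i)) with hpdef
  set q : Fin 8 → ℝ := fun i => b (some (Fin.castLE hn i)) - M with hqdef
  have eB : b none = M + T := by rw [hMdef, hTdef]; ring
  have eA : a none = M - T := by rw [hMdef]; ring
  have eb : ∀ i : Fin 8, b (some (Fin.castLE hn i)) = M + q i := by
    intro i; simp only [hqdef]; ring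
  have ea : ∀ i : Fin 8, a (some (Fin.castLE hn i)) = M - p i := by
    intro i; simp only [hpdef]; ring
  have et : ∀ i : Fin 8,
      (b (some (Fin.castLE hn i)) - a (some (Fin.castLE hn i)))/2 = (p i + q i)/2 := by
    intro i; rw [eb i, ea i]; ring
  have key : ∀ i : Fin 8,
      0 ≤ p i ∧ 0 ≤ q i ∧ max T ((p i + q i)/2) ≤ min T (p i) + min T (q i) := by
    intro i
    have hadj : (starGraph n).Adj none (some (Fin.castLE hn i)) :=
      ⟨fun h => (nomatch h), Or.inl rfl⟩
    have h1 := (hiff none (some (Fin.castLE hn i)) (fun h => nomatch h)).mp hadj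
    simp only at h1
    rw [← hTdef] at h1
    have e1 : min (b none) (b (some (Fin.castLE hn i))) = M + min T (q i) := by
      rw [eB, eb i, min_add_add_left]
    have e2 : max (a none) (a (some (Fin.castLE hn i))) = M - min T (p i) := by
      rw [eA, ea i, max_sub_sub_left]
    rw [et i, e1, e2, show M + min T (q i) - (M - min T (p i))
        = min T (p i) + min T (q i) by ring] at h1
    rcases le_total (min T (p i) + min T (q i)) 0 with h | h
    · exfalso
      rw [max_eq_right h] at h1
      have := le_trans (le_max_left T ((p i + q i)/2)) h1
      linarith
    · rw [max_eq_left h] at h1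
      have l1 : T ≤ min T (p i) + min T (q i) :=
        le_trans (le_max_left T ((p i + q i)/2)) h1
      have l2 : 0 ≤ min T (p i) := by linarith [min_le_left T (q i)]
      have l3 : 0 ≤ min T (q i) := by linarith [min_le_left T (p i)]
      exact ⟨le_trans l2 (min_le_right _ _), le_trans l3 (min_le_right _ _), h1⟩
  have hnon : ∀ i j : Fin 8, i ≠ j →
      min (p i) (p j) + min (q i) (q j) < max ((p i + q i)/2) ((p j + q j)/2) := by
    intro i j hij
    have hne : (some (Fin.castLE hn i) : Option (Fin n)) ≠ some (Fin.castLE hn j) := by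
      intro h
      exact hij (Fin.castLE_injective hn (Option.some_injective _ h))
    have hnadj : ¬ (starGraph n).Adj (some (Fin.castLE hn i)) (some (Fin.castLE hn j)) := by
      rintro ⟨-, h | h⟩ <;> exact nomatch h
    have h3 := not_le.mp fun hh => hnadj ((hiff _ _ hne).mpr hh)
    simp only at h3
    have e1 : min (b (some (Fin.castLE hn i))) (b (some (Fin.castLE hn j)))
        = M + min (q i) (q j) := by rw [eb i, eb j, min_add_add_left]
    have e2 : max (a (some (Fin.castLE hn i))) (a (some (Fin.castLE hn j)))
        = M - min (p i) (p j) := by rw [ea i, ea j, max_sub_sub_left]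
    rw [et i, et j, e1, e2, show M + min (q i) (q j) - (M - min (p i) (p j))
        = min (p i) (p j) + min (q i) (q j) by ring] at h3
    calc min (p i) (p j) + min (q i) (q j)
        ≤ max (min (p i) (p j) + min (q i) (q j)) 0 := le_max_left _ _
      _ < max ((p i + q i)/2) ((p j + q j)/2) := h3
  exact count_le T hT p q (fun i => (key i).1) (fun i => (key i).2.1)
    (fun i => (key i).2.2) hnon
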